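/- arXiv:1904.01855 — 3 statements merged into one kernel-verified Lean document; each statement's English description precedes it below -/
import Mathlib

section
/- (Local conservation law of SMD.) Let ψ : ℝ^p → ℝ be a strictly convex differentiable function with Bregman divergence D_ψ, let ℓ : ℝ → ℝ be differentiable, let f : ℝ^m × ℝ^p → ℝ be differentiable in its second argument, let x_i ∈ ℝ^m, y_i ∈ ℝ, and define the instantaneous loss L_i(w) = ℓ(y_i − f(x_i, w)) and its (formal) Bregman divergence D_{L_i}(w, w') = L_i(w) − L_i(w') − ∇L_i(w')ᵀ(w − w'). Let η > 0 and suppose w_i ∈ ℝ^p satisfies the SMD update ∇ψ(w_i) = ∇ψ(w_{i−1}) − η ∇L_i(w_{i−1}). Define E_i(w_i, w_{i−1}) = D_{ψ−ηL_i}(w_i, w_{i−1}) + η L_i(w_i). Then for every w ∈ ℝ^p, with v_i = y_i − f(x_i, w): D_ψ(w, w_{i−1}) + η ℓ(v_i) = D_ψ(w, w_i) + η D_{L_i}(w, w_{i−1}) + E_i(w_i, w_{i−1}). -/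
open RealInnerProductSpace

/-- Bregman divergence of a differentiable function `g` (defined formally for any `g`). -/
noncomputable def bregman {p : ℕ} (g : EuclideanSpace ℝ (Fin p) → ℝ)
    (w w' : EuclideanSpace ℝ (Fin p)) : ℝ :=
  g w - g w' - ⟪gradient g w', w - w'⟫

lemma gradient_sub_smul {p : ℕ} (ψ Li : EuclideanSpace ℝ (Fin p) → ℝ) (η : ℝ)
    (x : EuclideanSpace ℝ (Fin p)) (hψ : DifferentiableAt ℝ ψ x)
    (hL : DifferentiableAt ℝ Li x) :
    gradient (fun u => ψ u - η * Li u) x = gradient ψ x - η • gradient Li x := by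
  have h1 : HasFDerivAt ψ (InnerProductSpace.toDual ℝ _ (gradient ψ x)) x :=
    hψ.hasGradientAt.hasFDerivAt
  have h2 : HasFDerivAt Li (InnerProductSpace.toDual ℝ _ (gradient Li x)) x :=
    hL.hasGradientAt.hasFDerivAt
  have h3 : HasFDerivAt (fun u => ψ u - η * Li u)
      (InnerProductSpace.toDual ℝ _ (gradient ψ x - η • gradient Li x)) x := by
    have := h1.sub ((h2.const_mul η))
    have e : InnerProductSpace.toDual ℝ (EuclideanSpace ℝ (Fin p)) (gradient ψ x - η • gradient Li x)
        = InnerProductSpace.toDual ℝ (EuclideanSpace ℝ (Fin p)) (gradient ψ x)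
          - η • InnerProductSpace.toDual ℝ (EuclideanSpace ℝ (Fin p)) (gradient Li x) := by
      rw [map_sub, map_smul]
    rw [e]
    exact this
  exact ((hasGradientAt_iff_hasFDerivAt).2 h3).gradient

/-- Local conservation law of SMD. -/
theorem smd_local_conservation_law {m p : ℕ}
    (ψ : EuclideanSpace ℝ (Fin p) → ℝ)
    (hψdiff : Differentiable ℝ ψ)
    (hψconv : StrictConvexOn ℝ Set.univ ψ)
    (ℓ : ℝ → ℝ) (hℓdiff : Differentiable ℝ ℓ)
    (f : EuclideanSpace ℝ (Fin m) → EuclideanSpace ℝ (Fin p) → ℝ)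
    (hfdiff : ∀ a, Differentiable ℝ (fun w => f a w))
    (xi : EuclideanSpace ℝ (Fin m)) (yi : ℝ)
    (η : ℝ) (hη : 0 < η)
    (Li : EuclideanSpace ℝ (Fin p) → ℝ)
    (hLi : Li = fun w => ℓ (yi - f xi w))
    (wi wim : EuclideanSpace ℝ (Fin p))
    (hupdate : gradient ψ wi = gradient ψ wim - η • gradient Li wim) :
    ∀ w : EuclideanSpace ℝ (Fin p),
      bregman ψ w wim + η * ℓ (yi - f xi w)
        = bregman ψ w wi + η * bregman Li w wim
          + (bregman (fun u => ψ u - η * Li u) wi wim + η * Li wi) := by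
  intro w
  have hLidiff : Differentiable ℝ Li := by
    subst hLi
    exact hℓdiff.comp ((differentiable_const _).sub (hfdiff xi))
  have hgrad : gradient (fun u => ψ u - η * Li u) wim
      = gradient ψ wi :=
    (gradient_sub_smul ψ Li η wim (hψdiff wim) (hLidiff wim)).trans hupdate.symm
  have hLw : ℓ (yi - f xi w) = Li w := by rw [hLi]
  simp only [bregman, hgrad, hLw, hupdate, inner_sub_left, real_inner_smul_left,
    inner_sub_right]
  ring
end

section
/- (Global conservation law of SMD.) Under the setup of the local conservation law — ψ : ℝ^p → ℝ strictly convex differentiable, ℓ : ℝ → ℝ differentiable, f differentiable in its second argument, data (x_i, y_i) for i = 1, …, T, losses L_i(w) = ℓ(y_i − f(x_i, w)), η > 0, and SMD iterates satisfying ∇ψ(w_i) = ∇ψ(w_{i−1}) − η ∇L_i(w_{i−1}) for i = 1, …, T starting from w₀ — for every w ∈ ℝ^p, with v_i = y_i − f(x_i, w) and E_i(w_i, w_{i−1}) = D_{ψ−ηL_i}(w_i, w_{i−1}) + η L_i(w_i): D_ψ(w, w₀) + η ∑_{i=1}^T ℓ(v_i) = D_ψ(w, w_T) + η ∑_{i=1}^T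 D_{L_i}(w, w_{i−1}) + ∑_{i=1}^T E_i(w_i, w_{i−1}). -/
open RealInnerProductSpace

lemma gradient_combo_aux {p : ℕ} (ψ L : EuclideanSpace ℝ (Fin p) → ℝ) (η : ℝ)
    (x : EuclideanSpace ℝ (Fin p)) (hψ : DifferentiableAt ℝ ψ x)
    (hL : DifferentiableAt ℝ L x) :
    gradient (fun u => ψ u - η * L u) x = gradient ψ x - η • gradient L x := by
  have h1 : HasFDerivAt ψ ((InnerProductSpace.toDual ℝ _) (gradient ψ x)) x :=
    hψ.hasGradientAt.hasFDerivAt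
  have h2 : HasFDerivAt L ((InnerProductSpace.toDual ℝ _) (gradient L x)) x :=
    hL.hasGradientAt.hasFDerivAt
  have h3 : HasFDerivAt (fun u => ψ u - η * L u)
      ((InnerProductSpace.toDual ℝ _) (gradient ψ x - η • gradient L x)) x := by
    have := h1.sub (h2.const_mul η)
    simpa [map_sub, map_smul, smul_smul, Pi.sub_def] using this.congr_fderiv (by
      ext v
      simp [InnerProductSpace.toDual_apply_apply, inner_sub_left, real_inner_smul_left])
  exact (hasGradientAt_iff_hasFDerivAt.2 h3).gradient

lemma step_law {p : ℕ} (ψ L : EuclideanSpace ℝ (Fin p) → ℝ) (η : ℝ)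
    (hψ : Differentiable ℝ ψ) (hL : Differentiable ℝ L)
    (B C A : EuclideanSpace ℝ (Fin p))
    (hup : gradient ψ C = gradient ψ B - η • gradient L B) :
    bregman ψ A B + η * L A
      = bregman ψ A C + η * bregman L A B
        + (bregman (fun u => ψ u - η * L u) C B + η * L C) := by
  have hg : gradient (fun u => ψ u - η * L u) B = gradient ψ C := by
    rw [gradient_combo_aux ψ L η B (hψ B) (hL B), hup]
  simp only [bregman, hg, hup]
  simp only [inner_sub_left, inner_sub_right, real_inner_smul_left]
  ring

/-- Global conservation law of SMD over a horizon `T`. -/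
theorem smd_global_conservation_law {m p : ℕ}
    (ψ : EuclideanSpace ℝ (Fin p) → ℝ)
    (hψdiff : Differentiable ℝ ψ)
    (hψconv : StrictConvexOn ℝ Set.univ ψ)
    (ℓ : ℝ → ℝ) (hℓdiff : Differentiable ℝ ℓ)
    (f : EuclideanSpace ℝ (Fin m) → EuclideanSpace ℝ (Fin p) → ℝ)
    (hfdiff : ∀ a, Differentiable ℝ (fun w => f a w))
    (x : ℕ → EuclideanSpace ℝ (Fin m)) (y : ℕ → ℝ)
    (η : ℝ) (hη : 0 < η)
    (T : ℕ)
    (L : ℕ → EuclideanSpace ℝ (Fin p) → ℝ)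
    (hL : ∀ i, L i = fun w => ℓ (y i - f (x i) w))
    (w : ℕ → EuclideanSpace ℝ (Fin p))
    (hupdate : ∀ i ∈ Finset.Icc 1 T,
      gradient ψ (w i) = gradient ψ (w (i - 1)) - η • gradient (L i) (w (i - 1))) :
    ∀ wv : EuclideanSpace ℝ (Fin p),
      bregman ψ wv (w 0) + η * ∑ i ∈ Finset.Icc 1 T, ℓ (y i - f (x i) wv)
        = bregman ψ wv (w T)
          + η * ∑ i ∈ Finset.Icc 1 T, bregman (L i) wv (w (i - 1))
          + ∑ i ∈ Finset.Icc 1 T,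
              (bregman (fun u => ψ u - η * L i u) (w i) (w (i - 1)) + η * L i (w i)) := by
  intro wv
  have hLdiff : ∀ i, Differentiable ℝ (L i) := by
    intro i
    rw [hL i]
    exact hℓdiff.comp ((differentiable_const _).sub (hfdiff (x i)))
  induction T with
  | zero => simp
  | succ T ih =>
    have hT1 : 1 ≤ T + 1 := Nat.succ_le_succ (Nat.zero_le T)
    rw [Finset.sum_Icc_succ_top hT1, Finset.sum_Icc_succ_top hT1, Finset.sum_Icc_succ_top hT1]
    have ihh := ih (fun i hi => hupdate i (Finset.Icc_subset_Icc_right (Nat.le_succ T) hi))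
    have hstep := step_law ψ (L (T + 1)) η hψdiff (hLdiff (T + 1))
      (w T) (w (T + 1)) wv
      (by simpa using hupdate (T + 1) (Finset.mem_Icc.2 ⟨hT1, le_refl _⟩))
    have hLv : L (T + 1) wv = ℓ (y (T + 1) - f (x (T + 1)) wv) := by rw [hL]
    simp only [Nat.add_sub_cancel] at *
    rw [← hLv]
    linear_combination ihh + hstep
end

section
/- (Minimax optimality of SMD, achievability direction.) Let ψ : ℝ^p → ℝ be strictly convex differentiable, ℓ : ℝ → ℝ differentiable with ℓ ≥ 0, f differentiable in its second argument, data (x_i, y_i) for i = 1, …, T, losses L_i(w) = ℓ(y_i − f(x_i, w)), and η > 0 such that ψ − ηL_i is convex for all i. Let w₀, …, w_T be the SMD iterates satisfying ∇ψ(w_i) = ∇ψ(w_{i−1}) − η ∇L_i(w_{i−1}). Then for every w ∈ ℝ^p, with v_i = y_i − f(x_i, w): D_ψ(w, w_T) + η ∑_{i=1}^T D_{L_i}(w, w_{i−1}) ≤ D_ψ(w, w₀) + η ∑_{i=1}^T ℓ(v_i). In particular, whenever the right-hand side is positive, the ratio of the left-hand side to the right-hand side is at most 1. -/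
open RealInnerProductSpace

lemma inner_gradient_eq {p : ℕ} (g : EuclideanSpace ℝ (Fin p) → ℝ)
    (b v : EuclideanSpace ℝ (Fin p)) :
    ⟪gradient g b, v⟫ = fderiv ℝ g b v := by
  rw [gradient, InnerProductSpace.toDual_symm_apply]

lemma bregman_nonneg_of_convexOn {p : ℕ} {g : EuclideanSpace ℝ (Fin p) → ℝ}
    (hg : Differentiable ℝ g) (hc : ConvexOn ℝ Set.univ g)
    (a b : EuclideanSpace ℝ (Fin p)) : 0 ≤ bregman g a b := by
  set φ : ℝ → ℝ := fun t => g (AffineMap.lineMap b a t) with hφ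
  have hφc : ConvexOn ℝ Set.univ φ := by
    have := hc.comp_affineMap (AffineMap.lineMap b a : ℝ →ᵃ[ℝ] EuclideanSpace ℝ (Fin p))
    rw [Set.preimage_univ] at this
    exact this
  have hline : HasDerivAt (fun t : ℝ => AffineMap.lineMap b a t) (a - b) 0 := by
    simp only [AffineMap.lineMap_apply_module]
    have h1 : HasDerivAt (fun t : ℝ => (1 - t) • b) ((-1 : ℝ) • b) 0 :=
      ((hasDerivAt_id (0 : ℝ)).const_sub 1).smul_const b
    have h2 : HasDerivAt (fun t : ℝ => t • a) a 0 := by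
      simpa using (hasDerivAt_id (0 : ℝ)).smul_const a
    have := h1.add h2
    rw [neg_one_smul, ← sub_eq_neg_add] at this
    exact this
  have hφd : HasDerivAt φ (fderiv ℝ g b (a - b)) 0 := by
    have h0 : (AffineMap.lineMap b a : ℝ → EuclideanSpace ℝ (Fin p)) 0 = b := by
      simp [AffineMap.lineMap_apply_module]
    have := (hg (AffineMap.lineMap b a (0 : ℝ))).hasFDerivAt.comp_hasDerivAt 0 hline
    rw [h0] at this
    exact this
  have hs := hφc.le_slope_of_hasDerivAt (Set.mem_univ (0 : ℝ)) (Set.mem_univ (1 : ℝ))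
    zero_lt_one hφd
  have hslope : slope φ 0 1 = g a - g b := by
    simp [slope, hφ, AffineMap.lineMap_apply_module]
  rw [hslope] at hs
  have : bregman g a b = g a - g b - fderiv ℝ g b (a - b) := by
    rw [bregman, inner_gradient_eq]
  linarith [this ▸ sub_nonneg.mpr hs, this]

lemma gradient_comb {p : ℕ} {ψ L : EuclideanSpace ℝ (Fin p) → ℝ}
    {b : EuclideanSpace ℝ (Fin p)}
    (hψ : DifferentiableAt ℝ ψ b) (hL : DifferentiableAt ℝ L b) (η : ℝ) :
    gradient (fun w => ψ w - η * L w) b = gradient ψ b - η • gradient L b := by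
  have hf : fderiv ℝ (fun w => ψ w - η * L w) b = fderiv ℝ ψ b - η • fderiv ℝ L b := by
    rw [fderiv_fun_sub hψ (hL.const_mul η), fderiv_const_mul hL]
  rw [gradient, gradient, gradient, hf, map_sub, map_smul]

lemma smd_step {p : ℕ} {ψ Li : EuclideanSpace ℝ (Fin p) → ℝ}
    (hψ : Differentiable ℝ ψ) (hLi : Differentiable ℝ Li)
    (hLnn : ∀ v, 0 ≤ Li v) {η : ℝ} (hη : 0 < η)
    (hconv : ConvexOn ℝ Set.univ (fun w => ψ w - η * Li w))
    {b c : EuclideanSpace ℝ (Fin p)}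
    (hupd : gradient ψ c = gradient ψ b - η • gradient Li b)
    (a : EuclideanSpace ℝ (Fin p)) :
    bregman ψ a c + η * bregman Li a b ≤ bregman ψ a b + η * Li a := by
  have hG : Differentiable ℝ (fun w => ψ w - η * Li w) := hψ.sub (hLi.const_mul η)
  have h0 := bregman_nonneg_of_convexOn hG hconv c b
  have hgrad := gradient_comb (hψ b) (hLi b) η
  have h1 : 0 ≤ η * Li c := mul_nonneg hη.le (hLnn c)
  simp only [bregman, hgrad, hupd, inner_sub_left, inner_sub_right,
    real_inner_smul_left] at h0 ⊢
  nlinarith [h0, h1]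

/-- Minimax optimality of SMD (achievability direction): along the SMD iterates,
`D_ψ(w, w_T) + η ∑ D_{L_i}(w, w_{i−1}) ≤ D_ψ(w, w₀) + η ∑ ℓ(v_i)`, and hence the
corresponding ratio is at most `1` whenever the denominator is positive. -/
theorem smd_minimax_achievability {m p : ℕ}
    (ψ : EuclideanSpace ℝ (Fin p) → ℝ)
    (hψdiff : Differentiable ℝ ψ)
    (hψconv : StrictConvexOn ℝ Set.univ ψ)
    (ℓ : ℝ → ℝ) (hℓdiff : Differentiable ℝ ℓ) (hℓnonneg : ∀ t, 0 ≤ ℓ t)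
    (f : EuclideanSpace ℝ (Fin m) → EuclideanSpace ℝ (Fin p) → ℝ)
    (hfdiff : ∀ a, Differentiable ℝ (fun w => f a w))
    (x : ℕ → EuclideanSpace ℝ (Fin m)) (y : ℕ → ℝ)
    (η : ℝ) (hη : 0 < η)
    (T : ℕ)
    (L : ℕ → EuclideanSpace ℝ (Fin p) → ℝ)
    (hL : ∀ i, L i = fun w => ℓ (y i - f (x i) w))
    (hconv : ∀ i ∈ Finset.Icc 1 T, ConvexOn ℝ Set.univ (fun w => ψ w - η * L i w))
    (w : ℕ → EuclideanSpace ℝ (Fin p))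
    (hupdate : ∀ i ∈ Finset.Icc 1 T,
      gradient ψ (w i) = gradient ψ (w (i - 1)) - η • gradient (L i) (w (i - 1))) :
    ∀ wv : EuclideanSpace ℝ (Fin p),
      (bregman ψ wv (w T) + η * ∑ i ∈ Finset.Icc 1 T, bregman (L i) wv (w (i - 1))
          ≤ bregman ψ wv (w 0) + η * ∑ i ∈ Finset.Icc 1 T, ℓ (y i - f (x i) wv))
      ∧ (0 < bregman ψ wv (w 0) + η * ∑ i ∈ Finset.Icc 1 T, ℓ (y i - f (x i) wv) →
          (bregman ψ wv (w T) + η * ∑ i ∈ Finset.Icc 1 T, bregman (L i) wv (w (i - 1)))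
            / (bregman ψ wv (w 0) + η * ∑ i ∈ Finset.Icc 1 T, ℓ (y i - f (x i) wv)) ≤ 1) := by
  have hLdiff : ∀ i, Differentiable ℝ (L i) := by
    intro i
    rw [hL i]
    exact hℓdiff.comp ((differentiable_const (y i)).sub (hfdiff (x i)))
  have hLnn : ∀ i v, 0 ≤ L i v := by
    intro i v; rw [hL i]; exact hℓnonneg _
  intro wv
  have key : ∀ n, n ≤ T →
      bregman ψ wv (w n) + η * ∑ i ∈ Finset.Icc 1 n, bregman (L i) wv (w (i - 1))
        ≤ bregman ψ wv (w 0) + η * ∑ i ∈ Finset.Icc 1 n, ℓ (y i - f (x i) wv) := by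
    intro n
    induction n with
    | zero => intro _; simp
    | succ n ih =>
      intro hn
      have hmem : n + 1 ∈ Finset.Icc 1 T := Finset.mem_Icc.mpr ⟨by omega, hn⟩
      have hupd := hupdate (n + 1) hmem
      simp only [Nat.add_sub_cancel] at hupd
      have hstep := smd_step hψdiff (hLdiff (n + 1)) (hLnn (n + 1)) hη
        (hconv (n + 1) hmem) hupd wv
      have ihn := ih (by omega)
      rw [Finset.sum_Icc_succ_top (by omega : 1 ≤ n + 1),
        Finset.sum_Icc_succ_top (by omega : 1 ≤ n + 1)]
      simp only [Nat.add_sub_cancel]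
      have hLwv : L (n + 1) wv = ℓ (y (n + 1) - f (x (n + 1)) wv) := by rw [hL]
      rw [hLwv] at hstep
      have e1 : η * (∑ i ∈ Finset.Icc 1 n, bregman (L i) wv (w (i - 1))
          + bregman (L (n + 1)) wv (w n))
          = η * ∑ i ∈ Finset.Icc 1 n, bregman (L i) wv (w (i - 1))
            + η * bregman (L (n + 1)) wv (w n) := by ring
      have e2 : η * (∑ i ∈ Finset.Icc 1 n, ℓ (y i - f (x i) wv)
          + ℓ (y (n + 1) - f (x (n + 1)) wv))
          = η * ∑ i ∈ Finset.Icc 1 n, ℓ (y i - f (x i) wv)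
            + η * ℓ (y (n + 1) - f (x (n + 1)) wv) := by ring
      rw [e1, e2]
      linarith
  have hmain := key T le_rfl
  exact ⟨hmain, fun hpos => (div_le_one hpos).mpr hmain⟩
end
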